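/- Let T : X → Y be a Lipschitz map between Polish metric spaces, p ∈ [1,∞), s > 0, and μ a (p,s)-quantizable finite Borel measure on X with finite p-th moment. Then the pushforward T_♯μ is (p,s)-quantizable on Y. -/

import Mathlib

open MeasureTheory Filter Metric Set
open scoped ENNReal NNReal Topology

noncomputable def quantErr {X : Type*} [MetricSpace X] [MeasurableSpace X]
    (μ : Measure X) (p : ℝ) (S : Set X) : ℝ≥0∞ :=
  (∫⁻ x, ENNReal.ofReal (infDist x S ^ p) ∂μ) ^ (1 / p)

noncomputable def quantErrN {X : Type*} [MetricSpace X] [MeasurableSpace X]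
    (μ : Measure X) (p : ℝ) (N : ℕ) : ℝ≥0∞ :=
  ⨅ (S : Finset X) (_ : S.Nonempty) (_ : S.card ≤ N), quantErr μ p (S : Set X)

noncomputable def upperQuantCoeff {X : Type*} [MetricSpace X] [MeasurableSpace X]
    (μ : Measure X) (p s : ℝ) : ℝ≥0∞ :=
  Filter.limsup (fun N : ℕ => (N : ℝ≥0∞) ^ (1 / s) * quantErrN μ p N) Filter.atTop

/-- A measure is (p,s)-quantizable if the upper quantization coefficients of
submeasures with vanishing total mass tend to zero. -/
def Quantizable {X : Type*} [MetricSpace X] [MeasurableSpace X]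
    (μ : Measure X) (p s : ℝ) : Prop :=
  ∀ μn : ℕ → Measure X, (∀ n, μn n ≤ μ) →
    Tendsto (fun n => μn n Set.univ) atTop (𝓝 0) →
    Tendsto (fun n => upperQuantCoeff (μn n) p s) atTop (𝓝 0)

section Aux

open scoped Classical
set_option linter.unusedSectionVars false
variable {X Y : Type*} [MetricSpace X] [MeasurableSpace X] [BorelSpace X]
  [MetricSpace Y] [MeasurableSpace Y] [BorelSpace Y]

lemma aux_quantErr_map_le (T : X → Y) (L : ℝ≥0) (hT : LipschitzWith L T)
    (σ : Measure X) {p : ℝ} (hp : 1 ≤ p) (S : Finset X) (hS : S.Nonempty) :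
    quantErr (σ.map T) p ((S.image T : Finset Y) : Set Y) ≤ (L : ℝ≥0∞) * quantErr σ p (S : Set X) := by
  have h0 : (0 : ℝ) < p := lt_of_lt_of_le one_pos hp
  have hTm : Measurable T := hT.continuous.measurable
  set S' : Set Y := ((S.image T : Finset Y) : Set Y)
  have hF : Measurable fun y : Y => ENNReal.ofReal (infDist y S' ^ p) := by
    have : Continuous fun y : Y => infDist y S' ^ p :=
      (continuous_infDist_pt S').rpow_const (fun x => Or.inr h0.le)
    exact (ENNReal.continuous_ofReal.comp this).measurable
  have hmap : (∫⁻ y, ENNReal.ofReal (infDist y S' ^ p) ∂(σ.map T))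
      = ∫⁻ x, ENNReal.ofReal (infDist (T x) S' ^ p) ∂σ :=
    lintegral_map hF hTm
  have hpt : ∀ x : X, ENNReal.ofReal (infDist (T x) S' ^ p)
      ≤ ENNReal.ofReal ((L : ℝ) ^ p) * ENNReal.ofReal (infDist x (S : Set X) ^ p) := by
    intro x
    obtain ⟨y, hyS, hy⟩ := S.finite_toSet.isCompact.exists_infDist_eq_dist
      (by exact_mod_cast hS) x
    have hd : infDist (T x) S' ≤ (L : ℝ) * infDist x (S : Set X) := by
      calc infDist (T x) S' ≤ dist (T x) (T y) := by
            refine infDist_le_dist_of_mem ?_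
            simp only [S', Finset.coe_image]
            exact mem_image_of_mem T hyS
        _ ≤ (L : ℝ) * dist x y := hT.dist_le_mul x y
        _ = (L : ℝ) * infDist x (S : Set X) := by rw [← hy]
    have h1 : infDist (T x) S' ^ p ≤ ((L : ℝ) * infDist x (S : Set X)) ^ p :=
      Real.rpow_le_rpow infDist_nonneg hd h0.le
    have h2 : ((L : ℝ) * infDist x (S : Set X)) ^ p
        = (L : ℝ) ^ p * infDist x (S : Set X) ^ p :=
      Real.mul_rpow L.coe_nonneg infDist_nonneg
    calc ENNReal.ofReal (infDist (T x) S' ^ p)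
        ≤ ENNReal.ofReal ((L : ℝ) ^ p * infDist x (S : Set X) ^ p) := by
          exact ENNReal.ofReal_le_ofReal (h2 ▸ h1)
      _ = ENNReal.ofReal ((L : ℝ) ^ p) * ENNReal.ofReal (infDist x (S : Set X) ^ p) :=
          ENNReal.ofReal_mul (Real.rpow_nonneg L.coe_nonneg p)
  have hint : (∫⁻ y, ENNReal.ofReal (infDist y S' ^ p) ∂(σ.map T))
      ≤ ENNReal.ofReal ((L : ℝ) ^ p) * ∫⁻ x, ENNReal.ofReal (infDist x (S : Set X) ^ p) ∂σ := by
    rw [hmap, ← lintegral_const_mul' _ _ ENNReal.ofReal_ne_top]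
    exact lintegral_mono hpt
  have hLp : (ENNReal.ofReal ((L : ℝ) ^ p)) ^ (1 / p) = (L : ℝ≥0∞) := by
    rw [ENNReal.ofReal_rpow_of_nonneg (Real.rpow_nonneg L.coe_nonneg p) (by positivity),
      ← Real.rpow_mul L.coe_nonneg, mul_one_div_cancel h0.ne', Real.rpow_one,
      ENNReal.ofReal_coe_nnreal]
  calc quantErr (σ.map T) p S'
      ≤ (ENNReal.ofReal ((L : ℝ) ^ p)
          * ∫⁻ x, ENNReal.ofReal (infDist x (S : Set X) ^ p) ∂σ) ^ (1 / p) :=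
        ENNReal.rpow_le_rpow hint (by positivity)
    _ = (L : ℝ≥0∞) * quantErr σ p (S : Set X) := by
        rw [ENNReal.mul_rpow_of_nonneg _ _ (by positivity : (0:ℝ) ≤ 1 / p), hLp]
        rfl

lemma aux_quantErrN_eq (μ : Measure X) (p : ℝ) (N : ℕ) :
    quantErrN μ p N
      = ⨅ S : {S : Finset X // S.Nonempty ∧ S.card ≤ N}, quantErr μ p ((S : Finset X) : Set X) := by
  rw [quantErrN, iInf_subtype]
  exact iInf_congr fun S => by rw [iInf_and]

lemma aux_quantErrN_map_le [Nonempty X] (T : X → Y) (L : ℝ≥0) (hT : LipschitzWith L T)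
    (σ : Measure X) {p : ℝ} (hp : 1 ≤ p) {N : ℕ} (hN : 1 ≤ N) :
    quantErrN (σ.map T) p N ≤ (L : ℝ≥0∞) * quantErrN σ p N := by
  haveI : Nonempty {S : Finset X // S.Nonempty ∧ S.card ≤ N} := by
    obtain ⟨x⟩ := ‹Nonempty X›
    exact ⟨⟨{x}, Finset.singleton_nonempty x, by simpa using hN⟩⟩
  rw [aux_quantErrN_eq, aux_quantErrN_eq,
    ENNReal.mul_iInf (by simp [ENNReal.coe_ne_top])]
  refine le_iInf fun S => ?_
  refine iInf_le_of_le ⟨(S : Finset X).image T, S.2.1.image T,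
    le_trans Finset.card_image_le S.2.2⟩ ?_
  exact aux_quantErr_map_le T L hT σ hp (S : Finset X) S.2.1

lemma aux_map_withDensity (T : X → Y) (hT : Measurable T) {g : Y → ℝ≥0∞}
    (hg : Measurable g) (μ : Measure X) :
    (μ.withDensity (fun x => g (T x))).map T = (μ.map T).withDensity g := by
  ext s hs
  rw [Measure.map_apply hT hs, withDensity_apply _ (hT hs), withDensity_apply _ hs,
    ← setLIntegral_map hs hg hT]

end Aux

/-- Lipschitz pushforwards preserve (p,s)-quantizability. -/
theorem stmt_16 {X Y : Type*} [MetricSpace X] [CompleteSpace X]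
    [TopologicalSpace.SeparableSpace X] [MeasurableSpace X] [BorelSpace X]
    [MetricSpace Y] [CompleteSpace Y] [TopologicalSpace.SeparableSpace Y]
    [MeasurableSpace Y] [BorelSpace Y]
    (T : X → Y) (L : ℝ≥0) (hT : LipschitzWith L T)
    (μ : Measure X) [IsFiniteMeasure μ] (p s : ℝ) (hp : 1 ≤ p) (hs : 0 < s)
    (hmom : ∃ x₀ : X, ∫⁻ x, ENNReal.ofReal (dist x x₀ ^ p) ∂μ < ⊤)
    (hμ : Quantizable μ p s) :
    Quantizable (μ.map T) p s := by
  classical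
  have hTm : Measurable T := hT.continuous.measurable
  have h0p : (0 : ℝ) < p := lt_of_lt_of_le one_pos hp
  intro νn hle htend
  haveI : IsFiniteMeasure (μ.map T) := μ.isFiniteMeasure_map T
  by_cases hY : Nonempty Y
  · by_cases hX : Nonempty X
    · -- main case
      set ρ : ℕ → Y → ℝ≥0∞ := fun n => (νn n).rnDeriv (μ.map T)
      have hρm : ∀ n, Measurable (ρ n) := fun n => Measure.measurable_rnDeriv _ _
      set σn : ℕ → Measure X := fun n => μ.withDensity (fun x => ρ n (T x))
      haveI : ∀ n, IsFiniteMeasure (νn n) := fun n => isFiniteMeasure_of_le _ (hle n)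
      have hmapeq : ∀ n, (σn n).map T = νn n := by
        intro n
        rw [aux_map_withDensity T hTm (hρm n)]
        exact Measure.withDensity_rnDeriv_eq _ _ (Measure.absolutelyContinuous_of_le (hle n))
      have hσle : ∀ n, σn n ≤ μ := by
        intro n
        have h1 : ρ n ≤ᵐ[μ.map T] 1 := Measure.rnDeriv_le_one_of_le (hle n)
        have h2 : ∀ᵐ x ∂μ, ρ n (T x) ≤ 1 := by
          have hms : MeasurableSet {y | ρ n y ≤ 1} :=
            measurableSet_le (hρm n) measurable_const
          exact (ae_map_iff hTm.aemeasurable hms).mp h1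
        calc σn n ≤ μ.withDensity 1 := withDensity_mono (by filter_upwards [h2] with x hx using hx)
          _ = μ := withDensity_one
      have hσmass : ∀ n, σn n Set.univ = νn n Set.univ := by
        intro n
        rw [← hmapeq n, Measure.map_apply hTm MeasurableSet.univ, Set.preimage_univ]
      have hσtend : Tendsto (fun n => σn n Set.univ) atTop (𝓝 0) := by
        simpa only [hσmass] using htend
      have hσ : Tendsto (fun n => upperQuantCoeff (σn n) p s) atTop (𝓝 0) :=
        hμ σn hσle hσtend
      have hbound : ∀ n, upperQuantCoeff (νn n) p s ≤ (L : ℝ≥0∞) * upperQuantCoeff (σn n) p s := by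
        intro n
        rw [← hmapeq n]
        have hpt : ∀ N : ℕ, (N : ℝ≥0∞) ^ (1 / s) * quantErrN ((σn n).map T) p N
            ≤ (L : ℝ≥0∞) * ((N : ℝ≥0∞) ^ (1 / s) * quantErrN (σn n) p N) := by
          intro N
          rcases Nat.eq_zero_or_pos N with hN | hN
          · subst hN
            have h1 : ((0:ℕ):ℝ≥0∞) ^ (1 / s) = 0 := by
              rw [Nat.cast_zero, ENNReal.zero_rpow_of_pos (by positivity)]
            rw [h1, zero_mul]; exact zero_le
          · calc (N : ℝ≥0∞) ^ (1 / s) * quantErrN ((σn n).map T) p N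
                ≤ (N : ℝ≥0∞) ^ (1 / s) * ((L : ℝ≥0∞) * quantErrN (σn n) p N) :=
                  mul_le_mul_right (aux_quantErrN_map_le T L hT (σn n) hp hN) _
              _ = (L : ℝ≥0∞) * ((N : ℝ≥0∞) ^ (1 / s) * quantErrN (σn n) p N) := by ring
        calc upperQuantCoeff ((σn n).map T) p s
            ≤ limsup (fun N : ℕ => (L : ℝ≥0∞) * ((N : ℝ≥0∞) ^ (1 / s) * quantErrN (σn n) p N))
              atTop := limsup_le_limsup (Eventually.of_forall hpt)
          _ = (L : ℝ≥0∞) * upperQuantCoeff (σn n) p s :=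
              ENNReal.limsup_const_mul_of_ne_top ENNReal.coe_ne_top
      have hup : Tendsto (fun n => (L : ℝ≥0∞) * upperQuantCoeff (σn n) p s) atTop (𝓝 0) := by
        have := ENNReal.Tendsto.const_mul (a := (L : ℝ≥0∞)) hσ (Or.inr ENNReal.coe_ne_top)
        simpa using this
      exact tendsto_of_tendsto_of_tendsto_of_le_of_le tendsto_const_nhds hup
        (fun n => zero_le) hbound
    · -- X empty, Y nonempty
      haveI hXe : IsEmpty X := not_nonempty_iff.mp hX
      have hμ0 : μ.map T = 0 := by
        have : μ = 0 := Measure.eq_zero_of_isEmpty μ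
        simp [this]
      have hν0 : ∀ n, νn n = 0 := fun n => le_antisymm (hμ0 ▸ hle n) ((νn n).zero_le)
      have hq : ∀ n, upperQuantCoeff (νn n) p s = 0 := by
        intro n
        rw [hν0 n]
        have hzero : ∀ N : ℕ, (N : ℝ≥0∞) ^ (1 / s) * quantErrN (0 : Measure Y) p N = 0 := by
          intro N
          rcases Nat.eq_zero_or_pos N with hN | hN
          · subst hN
            have h1 : ((0:ℕ):ℝ≥0∞) ^ (1 / s) = 0 := by
              rw [Nat.cast_zero, ENNReal.zero_rpow_of_pos (by positivity)]
            rw [h1, zero_mul]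
          · obtain ⟨y⟩ := hY
            have : quantErrN (0 : Measure Y) p N = 0 := by
              refine le_antisymm ?_ zero_le
              refine iInf_le_of_le {y} ?_
              refine le_trans (iInf_le_of_le (Finset.singleton_nonempty y) ?_) le_rfl
              refine iInf_le_of_le (by simp; omega) ?_
              simp only [quantErr, lintegral_zero_measure]
              rw [ENNReal.zero_rpow_of_pos (one_div_pos.mpr h0p)]
            simp [this]
        unfold upperQuantCoeff
        simp only [hzero]
        exact limsup_const 0
      simp only [hq]
      exact tendsto_const_nhds
  · -- Y empty: contradiction with quantizability of μ
    exfalso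
    haveI hYe : IsEmpty Y := not_nonempty_iff.mp hY
    haveI hXe : IsEmpty X := ⟨fun x => hYe.false (T x)⟩
    have h0 := hμ (fun _ => 0) (fun _ => μ.zero_le) (by simp)
    have hconst : upperQuantCoeff (0 : Measure X) p s = ⊤ := by
      have hinf : ∀ N : ℕ, 1 ≤ N → quantErrN (0 : Measure X) p N = ⊤ := by
        intro N _
        refine le_antisymm le_top (le_iInf fun S => le_iInf fun hS => ?_)
        obtain ⟨x, -⟩ := hS
        exact (hXe.false x).elim
      have hev : ∀ᶠ N : ℕ in atTop,
          (N : ℝ≥0∞) ^ (1 / s) * quantErrN (0 : Measure X) p N = ⊤ := by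
        filter_upwards [eventually_ge_atTop 1] with N hN
        rw [hinf N hN, ENNReal.mul_top]
        have : (1 : ℝ≥0∞) ≤ (N : ℝ≥0∞) ^ (1 / s) := by
          calc (1 : ℝ≥0∞) = 1 ^ (1 / s) := (ENNReal.one_rpow _).symm
            _ ≤ (N : ℝ≥0∞) ^ (1 / s) :=
              ENNReal.rpow_le_rpow (by exact_mod_cast hN) (by positivity)
        intro h
        rw [h] at this
        simp at this
      unfold upperQuantCoeff
      rw [limsup_congr hev, limsup_const]
    rw [show (fun n : ℕ => upperQuantCoeff ((fun _ : ℕ => (0 : Measure X)) n) p s)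
        = fun _ : ℕ => (⊤ : ℝ≥0∞) from funext fun n => hconst] at h0
    have := tendsto_nhds_unique h0 tendsto_const_nhds
    simp at this
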